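/- Let τ ≥ 8e and 0 < Z ≤ 1/e. Then the unique U_{τ,Z} > 0 with g̃_{τ,Z}(U_{τ,Z}) = 1 satisfies U_{τ,Z} ≤ √(16·τ·ln(1/Z)). Equivalently, g̃_{τ,Z}(√(16·τ·ln(1/Z))) ≥ 1. -/

import Mathlib

/-- erf(x) = ∫₀ˣ exp(−s²/2) ds -/
noncomputable def erf (x : ℝ) : ℝ := ∫ s in (0:ℝ)..x, Real.exp (-s^2/2)

/-- g̃_{τ,Z}(x) = √(τ/8)·Z·erf(x/√(8τ))·exp(x²/(16τ)) -/
noncomputable def gtilde (τ Z x : ℝ) : ℝ :=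
  Real.sqrt (τ/8) * Z * erf (x / Real.sqrt (8*τ)) * Real.exp (x^2/(16*τ))

lemma erf_cont_integrand : Continuous (fun s : ℝ => Real.exp (-s^2/2)) := by
  continuity

lemma erf_intInt (a b : ℝ) : IntervalIntegrable (fun s : ℝ => Real.exp (-s^2/2))
    MeasureTheory.volume a b := erf_cont_integrand.intervalIntegrable a b

lemma erf_continuous : Continuous erf :=
  intervalIntegral.continuous_primitive (fun a b => erf_intInt a b) 0

lemma erf_zero : erf 0 = 0 := intervalIntegral.integral_same

lemma erf_strictMono : StrictMono erf := by
  intro a b hab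
  have h := intervalIntegral.integral_add_adjacent_intervals (erf_intInt 0 a) (erf_intInt a b)
  have hpos : 0 < ∫ s in a..b, Real.exp (-s^2/2) :=
    intervalIntegral.intervalIntegral_pos_of_pos_on (erf_intInt a b)
      (fun x _ => Real.exp_pos _) hab
  unfold erf
  linarith [h]

lemma erf_one_ge : Real.exp (-(1:ℝ)/2) ≤ erf 1 := by
  have : ∫ s in (0:ℝ)..1, Real.exp (-(1:ℝ)/2) ≤ ∫ s in (0:ℝ)..1, Real.exp (-s^2/2) := by
    apply intervalIntegral.integral_mono_on (by norm_num)
      (intervalIntegrable_const) (erf_intInt 0 1)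
    intro x hx
    apply Real.exp_le_exp.mpr
    nlinarith [hx.1, hx.2]
  unfold erf
  simpa using this

theorem stmt_3 (τ Z : ℝ) (hτ : 8 * Real.exp 1 ≤ τ)
    (hZ : 0 < Z) (hZ1 : Z ≤ 1 / Real.exp 1) :
    (∃! U : ℝ, 0 < U ∧ gtilde τ Z U = 1) ∧
    (∀ U : ℝ, 0 < U → gtilde τ Z U = 1 →
      U ≤ Real.sqrt (16 * τ * Real.log (1/Z))) ∧
    1 ≤ gtilde τ Z (Real.sqrt (16 * τ * Real.log (1/Z))) := by
  have he : (0:ℝ) < Real.exp 1 := Real.exp_pos 1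
  have hτ0 : (0:ℝ) < τ := lt_of_lt_of_le (by positivity) hτ
  set L := Real.log (1/Z) with hLdef
  have hinv : Real.exp 1 ≤ 1/Z := by
    rw [le_div_iff₀ hZ]
    calc Real.exp 1 * Z ≤ Real.exp 1 * (1/Real.exp 1) :=
          mul_le_mul_of_nonneg_left hZ1 he.le
      _ = 1 := by field_simp
  have hL : 1 ≤ L := by
    have h := Real.log_le_log (Real.exp_pos 1) hinv
    rwa [Real.log_exp] at h
  set M := Real.sqrt (16 * τ * L) with hM
  have hM0 : 0 < M := Real.sqrt_pos.mpr (by nlinarith)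
  have hMsq : M^2 = 16 * τ * L := Real.sq_sqrt (by nlinarith)
  have hexpM : Real.exp (M^2/(16*τ)) = 1/Z := by
    rw [hMsq]
    have h' : 16 * τ * L / (16 * τ) = L := by field_simp
    rw [h', hLdef, Real.exp_log (by positivity)]
  have hargM : M / Real.sqrt (8*τ) = Real.sqrt (2*L) := by
    rw [hM, ← Real.sqrt_div (by nlinarith)]
    congr 1
    field_simp
    ring
  have herfM : Real.exp (-(1:ℝ)/2) ≤ erf (M / Real.sqrt (8*τ)) := by
    rw [hargM]
    refine le_trans erf_one_ge (erf_strictMono.monotone ?_)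
    rw [show (1:ℝ) = Real.sqrt 1 by simp]
    exact Real.sqrt_le_sqrt (by linarith)
  have hsqrt : Real.exp ((1:ℝ)/2) ≤ Real.sqrt (τ/8) := by
    rw [Real.exp_half]
    exact Real.sqrt_le_sqrt (by linarith)
  have key : 1 ≤ gtilde τ Z M := by
    unfold gtilde
    rw [hexpM]
    have h1 : Real.exp ((1:ℝ)/2) * Real.exp (-(1:ℝ)/2) = 1 := by
      rw [← Real.exp_add]; norm_num
    have he2 : (0:ℝ) < Real.exp (-(1:ℝ)/2) := Real.exp_pos _
    have hh : Real.exp ((1:ℝ)/2) * Real.exp (-(1:ℝ)/2) ≤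
        Real.sqrt (τ/8) * erf (M / Real.sqrt (8*τ)) :=
      mul_le_mul hsqrt herfM he2.le (Real.sqrt_nonneg _)
    rw [h1] at hh
    calc (1:ℝ) ≤ Real.sqrt (τ/8) * erf (M / Real.sqrt (8*τ)) := hh
      _ = Real.sqrt (τ/8) * Z * erf (M / Real.sqrt (8*τ)) * (1/Z) := by
          field_simp
  -- strict monotonicity on Ici 0
  have hsτ : 0 < Real.sqrt (8*τ) := Real.sqrt_pos.mpr (by linarith)
  have hmono : StrictMonoOn (gtilde τ Z) (Set.Ici 0) := by
    intro a ha b hb hab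
    simp only [Set.mem_Ici] at ha hb
    unfold gtilde
    have hc : 0 < Real.sqrt (τ/8) * Z := by positivity
    have herf : erf (a / Real.sqrt (8*τ)) < erf (b / Real.sqrt (8*τ)) :=
      erf_strictMono (by gcongr)
    have herfnn : 0 ≤ erf (a / Real.sqrt (8*τ)) := by
      rw [← erf_zero]
      exact erf_strictMono.monotone (by positivity)
    have hexple : Real.exp (a^2/(16*τ)) ≤ Real.exp (b^2/(16*τ)) := by
      apply Real.exp_le_exp.mpr
      gcongr
    exact mul_lt_mul (mul_lt_mul_of_pos_left herf hc) hexple (Real.exp_pos _)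
      (mul_nonneg hc.le (herfnn.trans herf.le))
  have hcont : Continuous (gtilde τ Z) := by
    apply Continuous.mul
    · exact (continuous_const.mul (erf_continuous.comp (continuous_id.div_const _)))
    · exact Real.continuous_exp.comp (continuous_pow 2 |>.div_const _)
  have hg0 : gtilde τ Z 0 = 0 := by
    unfold gtilde
    simp [erf_zero]
  -- existence
  have hivt : (1:ℝ) ∈ gtilde τ Z '' Set.Icc 0 M := by
    apply intermediate_value_Icc hM0.le hcont.continuousOn
    rw [hg0]
    exact ⟨zero_le_one, key⟩
  obtain ⟨U, hUmem, hU1⟩ := hivt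
  have hU0 : 0 < U := by
    rcases lt_or_eq_of_le hUmem.1 with h | h
    · exact h
    · exfalso; rw [← h] at hU1; rw [hg0] at hU1; norm_num at hU1
  have hle : ∀ V : ℝ, 0 < V → gtilde τ Z V = 1 → V ≤ M := by
    intro V hV hVg
    by_contra hcon
    push_neg at hcon
    have := hmono (Set.mem_Ici.mpr hM0.le) (Set.mem_Ici.mpr hV.le) hcon
    rw [hVg] at this
    linarith
  refine ⟨⟨U, ⟨hU0, hU1⟩, ?_⟩, hle, key⟩
  intro V hV
  have h1 := hle V hV.1 hV.2
  exact hmono.injOn (Set.mem_Ici.mpr hV.1.le) (Set.mem_Ici.mpr hU0.le)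
    (by rw [hV.2, hU1])
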